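/- Let R be a Noetherian regular local ring of prime characteristic p > 0 satisfying condition (*), let a be an ideal of R generated by m elements, and let α > m be an F-jumping coefficient of a. Then α − 1 is also an F-jumping coefficient of a. -/

import Mathlib

/-- The `q`-th bracket power of an ideal: the ideal generated by the `q`-th powers
of the elements of `J`. -/
def bracketPow {R : Type*} [CommRing R] (J : Ideal R) (q : ℕ) : Ideal R :=
  Ideal.span ((fun x => x ^ q) '' (J : Set R))

/-- `Ie p a e` is the intersection of all ideals `I` with `a ⊆ I^{[p^e]}`. -/
def Ie {R : Type*} [CommRing R] (p : ℕ) (a : Ideal R) (e : ℕ) : Ideal R :=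
  sInf {I : Ideal R | a ≤ bracketPow I (p ^ e)}

/-- Condition (*): `a ⊆ I_e(a)^{[p^e]}` for every ideal `a` and every `e ≥ 1`. -/
def CondStar (R : Type*) [CommRing R] (p : ℕ) : Prop :=
  ∀ (a : Ideal R) (e : ℕ), 1 ≤ e → a ≤ bracketPow (Ie p a e) (p ^ e)

/-- The generalized test ideal `τ(a^c)`: the supremum, in the lattice of ideals of `R`,
of the ideals `I_e(a^{⌈c p^e⌉})` for `e ≥ 1`. -/
noncomputable def tau {R : Type*} [CommRing R] (p : ℕ) (a : Ideal R) (c : ℝ) : Ideal R :=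
  ⨆ e : {e : ℕ // 1 ≤ e}, Ie p (a ^ ⌈c * (p : ℝ) ^ (e : ℕ)⌉₊) (e : ℕ)

/-- `c > 0` is an F-jumping coefficient of `a` if `τ(a^c) ≠ τ(a^{c-ε})` for all
`0 < ε < c`. -/
def IsFJumpingCoeff {R : Type*} [CommRing R] (p : ℕ) (a : Ideal R) (c : ℝ) : Prop :=
  0 < c ∧ ∀ ε : ℝ, 0 < ε → ε < c → tau p a c ≠ tau p a (c - ε)

/-- `x` is an accumulation point of `S ⊆ ℝ`. -/
def IsAccumulationPt (S : Set ℝ) (x : ℝ) : Prop :=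
  ∀ ε : ℝ, 0 < ε → ∃ y ∈ S, y ≠ x ∧ |y - x| < ε

/-- `R` is a regular local ring: Noetherian, local, and the maximal ideal is generated
by `dim R` elements. -/
def IsRegularStmt (R : Type*) [CommRing R] [IsLocalRing R] : Prop :=
  ∃ s : Finset R, IsLocalRing.maximalIdeal R = Ideal.span (s : Set R) ∧
    (s.card : WithBot (WithTop ℕ)) = ringKrullDim R

section SK
open Ideal

variable {R : Type*} [CommRing R]

lemma SK.pow_mem_bracketPow {J : Ideal R} {x : R} (hx : x ∈ J) (q : ℕ) :
    x ^ q ∈ bracketPow J q :=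
  Ideal.subset_span ⟨x, hx, rfl⟩

lemma SK.bracketPow_mono {I J : Ideal R} (h : I ≤ J) (q : ℕ) :
    bracketPow I q ≤ bracketPow J q :=
  Ideal.span_mono (Set.image_mono h)

lemma SK.bracketPow_le_pow (J : Ideal R) (q : ℕ) : bracketPow J q ≤ J ^ q := by
  refine Ideal.span_le.mpr ?_
  rintro _ ⟨x, hx, rfl⟩
  exact Ideal.pow_mem_pow hx q

lemma SK.bracketPow_le_self (J : Ideal R) {q : ℕ} (hq : 1 ≤ q) : bracketPow J q ≤ J :=
  (SK.bracketPow_le_pow J q).trans (Ideal.pow_le_self (by omega))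

lemma SK.bracketPow_span_singleton (g : R) (q : ℕ) :
    bracketPow (Ideal.span {g}) q = Ideal.span {g ^ q} := by
  apply le_antisymm
  · refine Ideal.span_le.mpr ?_
    rintro _ ⟨x, hx, rfl⟩
    obtain ⟨c, rfl⟩ := Ideal.mem_span_singleton'.mp hx
    show (c * g) ^ q ∈ Ideal.span {g ^ q}
    rw [mul_pow]
    exact Ideal.mul_mem_left _ _ (Ideal.mem_span_singleton_self _)
  · refine Ideal.span_le.mpr ?_
    rintro _ rfl
    exact SK.pow_mem_bracketPow (Ideal.mem_span_singleton_self g) q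

lemma SK.bracketPow_eq_map {p : ℕ} (hp : p.Prime) [CharP R p] (J : Ideal R) (e : ℕ) :
    haveI : ExpChar R p := ExpChar.prime hp
    bracketPow J (p ^ e) = J.map (iterateFrobenius R p e) := by
  haveI : ExpChar R p := ExpChar.prime hp
  have : ⇑(iterateFrobenius R p e) = fun x : R => x ^ p ^ e := by
    funext x; exact iterateFrobenius_def p e x
  show bracketPow J (p ^ e) = Ideal.span (⇑(iterateFrobenius R p e) '' (J : Set R))
  rw [this]
  rfl

lemma SK.bracketPow_mul {p : ℕ} (hp : p.Prime) [CharP R p] (I J : Ideal R) (e : ℕ) :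
    bracketPow (I * J) (p ^ e) = bracketPow I (p ^ e) * bracketPow J (p ^ e) := by
  haveI : ExpChar R p := ExpChar.prime hp
  rw [SK.bracketPow_eq_map hp, SK.bracketPow_eq_map hp, SK.bracketPow_eq_map hp,
    Ideal.map_mul]

lemma SK.Ie_le {p : ℕ} {a I : Ideal R} {e : ℕ} (h : a ≤ bracketPow I (p ^ e)) :
    Ie p a e ≤ I :=
  sInf_le h

lemma SK.Ie_mono {p : ℕ} {a b : Ideal R} (h : a ≤ b) (e : ℕ) : Ie p a e ≤ Ie p b e :=
  sInf_le_sInf fun _ hI => le_trans h hI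

lemma SK.bracketPow_inf {p : ℕ} (hstar : CondStar R p) {e : ℕ} (he : 1 ≤ e) (I J : Ideal R) :
    bracketPow (I ⊓ J) (p ^ e) = bracketPow I (p ^ e) ⊓ bracketPow J (p ^ e) := by
  refine le_antisymm (le_inf (SK.bracketPow_mono inf_le_left _)
    (SK.bracketPow_mono inf_le_right _)) ?_
  set b : Ideal R := bracketPow I (p ^ e) ⊓ bracketPow J (p ^ e) with hb
  have h1 : Ie p b e ≤ I := SK.Ie_le inf_le_left
  have h2 : Ie p b e ≤ J := SK.Ie_le inf_le_right
  exact (hstar b e he).trans (SK.bracketPow_mono (le_inf h1 h2) _)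

/-- `I ⊓ (g) = (I : g)·(g)`. -/
lemma SK.inf_span_singleton (I : Ideal R) (g : R) :
    I ⊓ Ideal.span {g} = I.colon (Ideal.span {g}) * Ideal.span {g} := by
  apply le_antisymm
  · rintro u ⟨huI, hug⟩
    obtain ⟨r, rfl⟩ := Ideal.mem_span_singleton'.mp hug
    exact Ideal.mul_mem_mul (Ideal.mem_colon_span_singleton.mpr huI)
      (Ideal.mem_span_singleton_self g)
  · rw [Ideal.mul_le]
    intro r hr s hs
    obtain ⟨c, rfl⟩ := Ideal.mem_span_singleton'.mp hs
    constructor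
    · have h1 : r * g ∈ I := Ideal.mem_colon_span_singleton.mp hr
      have h2 : c * (r * g) ∈ I := Ideal.mul_mem_left _ _ h1
      have h3 : r * (c * g) = c * (r * g) := by ring
      rw [h3]; exact h2
    · have h4 : c * g ∈ Ideal.span {g} :=
        Ideal.mul_mem_left _ _ (Ideal.mem_span_singleton_self g)
      exact Ideal.mul_mem_left _ _ h4

/-- `(g+h) ⊓ (g) = ((g) : h)·(g+h)`. -/
lemma SK.span_add_inf_span (g h : R) :
    Ideal.span {g + h} ⊓ Ideal.span {g}
      = (Ideal.span {g}).colon (Ideal.span {h}) * Ideal.span {g + h} := by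
  apply le_antisymm
  · rintro u ⟨hu1, hu2⟩
    obtain ⟨r, rfl⟩ := Ideal.mem_span_singleton'.mp hu1
    have hrh : r * h ∈ Ideal.span {g} := by
      have h5 : r * (g + h) - r * g ∈ Ideal.span {g} := by
        refine Submodule.sub_mem _ hu2 ?_
        exact Ideal.mul_mem_left _ _ (Ideal.mem_span_singleton_self g)
      have h6 : r * h = r * (g + h) - r * g := by ring
      rw [h6]; exact h5
    exact Ideal.mul_mem_mul (Ideal.mem_colon_span_singleton.mpr hrh)
      (Ideal.mem_span_singleton_self _)
  · rw [Ideal.mul_le]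
    intro c hc s hs
    obtain ⟨r, rfl⟩ := Ideal.mem_span_singleton'.mp hs
    have hch : c * h ∈ Ideal.span {g} := Ideal.mem_colon_span_singleton.mp hc
    constructor
    · have h7 : r * (g + h) ∈ Ideal.span {g + h} :=
        Ideal.mul_mem_left _ _ (Ideal.mem_span_singleton_self _)
      exact Ideal.mul_mem_left _ _ h7
    · have h8 : c * (g + h) ∈ Ideal.span {g} := by
        have hg : c * g ∈ Ideal.span {g} :=
          Ideal.mul_mem_left _ _ (Ideal.mem_span_singleton_self g)
        have h9 : c * (g + h) = c * g + c * h := by ring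
        rw [h9]; exact Submodule.add_mem _ hg hch
      have h10 : c * (r * (g + h)) = r * (c * (g + h)) := by ring
      rw [h10]; exact Ideal.mul_mem_left _ _ h8

/-- binomial for `xy = 0`. -/
lemma SK.add_pow_of_mul_eq_zero {x y : R} (h : x * y = 0) :
    ∀ n : ℕ, 1 ≤ n → (x + y) ^ n = x ^ n + y ^ n := by
  intro n hn
  induction n with
  | zero => omega
  | succ k ih =>
    rcases Nat.eq_or_lt_of_le hn with h1 | h1
    · simp [← h1]
    · have hk : 1 ≤ k := by omega
      have := ih hk
      have hxy : x * y ^ k = 0 := by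
        have : y ^ k = y * y ^ (k - 1) := by
          conv_lhs => rw [show k = 1 + (k - 1) by omega]
          rw [pow_add, pow_one]
        rw [this, ← mul_assoc, h, zero_mul]
      have hyx : y * x ^ k = 0 := by
        have : x ^ k = x * x ^ (k - 1) := by
          conv_lhs => rw [show k = 1 + (k - 1) by omega]
          rw [pow_add, pow_one]
        rw [this, ← mul_assoc, mul_comm y x, h, zero_mul]
      calc (x + y) ^ (k + 1) = (x + y) * (x + y) ^ k := by ring
        _ = (x + y) * (x ^ k + y ^ k) := by rw [ih hk]
        _ = x ^ (k + 1) + y ^ (k + 1) + (x * y ^ k + y * x ^ k) := by ring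
        _ = x ^ (k + 1) + y ^ (k + 1) := by rw [hxy, hyx]; ring

lemma SK.sum_le_ideal {ι : Type*} (s : Finset ι) (f : ι → Ideal R) (T : Ideal R)
    (h : ∀ i ∈ s, f i ≤ T) : (∑ i ∈ s, f i) ≤ T := by
  classical
  induction s using Finset.induction with
  | empty => simp
  | @insert i s hi ih =>
    rw [Finset.sum_insert hi, Submodule.add_eq_sup]
    exact sup_le (h i (Finset.mem_insert_self i s))
      (ih fun j hj => h j (Finset.mem_insert_of_mem hj))

lemma SK.pow_mono_left {I J : Ideal R} (h : I ≤ J) (n : ℕ) : I ^ n ≤ J ^ n := by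
  induction n with
  | zero => simp
  | succ k ih =>
    rw [pow_succ, pow_succ]
    exact Ideal.mul_mono ih h
/-- Binomial bound for ideals. -/
lemma SK.ideal_add_pow_le (I J : Ideal R) (n : ℕ) :
    (I + J) ^ n ≤ ∑ k ∈ Finset.range (n + 1), I ^ k * J ^ (n - k) := by
  rw [add_pow]
  apply SK.sum_le_ideal
  intro k hk
  have h1 : I ^ k * J ^ (n - k) * (n.choose k : Ideal R) ≤ I ^ k * J ^ (n - k) * ⊤ :=
    Ideal.mul_mono_right le_top
  refine le_trans h1 ?_
  rw [Ideal.mul_top]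
  refine Finset.single_le_sum (f := fun k => I ^ k * J ^ (n - k)) ?_ hk
  intro i _
  exact bot_le

/-- Pigeonhole: if `n > card·(q-1)` then a product of `n` generators has some
generator appearing at least `q` times. -/
lemma SK.pigeon {ι : Type*} [DecidableEq ι] (x : ι → R) (q : ℕ) (hq : 1 ≤ q) :
    ∀ (s : Finset ι) (n : ℕ), s.card * (q - 1) < n →
      (∑ i ∈ s, Ideal.span {x i}) ^ n ≤
        ∑ i ∈ s, Ideal.span {x i ^ q} * (∑ j ∈ s, Ideal.span {x j}) ^ (n - q) := by
  intro s
  induction s using Finset.induction with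
  | empty =>
    intro n hn
    simp only [Finset.sum_empty]
    rw [zero_pow (by omega : n ≠ 0)]
  | @insert i₀ s hi₀ ih =>
    intro n hn
    rw [Finset.card_insert_of_notMem hi₀] at hn
    have hqn : q ≤ n := by
      have : q - 1 < n := by
        calc q - 1 ≤ (s.card + 1) * (q - 1) := by nlinarith [Nat.zero_le s.card]
          _ < n := hn
      omega
    set A : Ideal R := Ideal.span {x i₀} with hA
    set B : Ideal R := ∑ j ∈ s, Ideal.span {x j} with hB
    have hsum : ∑ j ∈ insert i₀ s, Ideal.span {x j} = A + B := Finset.sum_insert hi₀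
    rw [hsum, Finset.sum_insert hi₀]
    -- goal : (A+B)^n ≤ span{x i₀ ^ q} * (A+B)^(n-q) + ∑ i in s, span{x i ^ q} * (A+B)^(n-q)
    refine le_trans (SK.ideal_add_pow_le A B n) ?_
    apply SK.sum_le_ideal
    intro k hk
    have hkn : k ≤ n := by
      have := Finset.mem_range.mp hk; omega
    by_cases hkq : q ≤ k
    · -- x i₀ appears ≥ q times
      have hA1 : A ^ k = Ideal.span {x i₀ ^ q} * A ^ (k - q) := by
        rw [hA, Ideal.span_singleton_pow, Ideal.span_singleton_pow,
          Ideal.span_singleton_mul_span_singleton, ← pow_add,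
          show q + (k - q) = k from by omega]
      have h2 : A ^ k * B ^ (n - k)
          ≤ Ideal.span {x i₀ ^ q} * (A + B) ^ (n - q) := by
        rw [hA1, mul_assoc]
        refine Ideal.mul_mono_right ?_
        have hA2 : A ^ (k - q) ≤ (A + B) ^ (k - q) := SK.pow_mono_left le_sup_left _
        have hB2 : B ^ (n - k) ≤ (A + B) ^ (n - k) := SK.pow_mono_left le_sup_right _
        refine le_trans (Ideal.mul_mono hA2 hB2) ?_
        rw [← pow_add]
        refine Ideal.pow_le_pow_right ?_
        omega
      refine le_trans h2 ?_
      rw [Submodule.add_eq_sup]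
      exact le_sup_left
    · -- use induction hypothesis on B
      push_neg at hkq
      have hcard : s.card * (q - 1) < n - k := by
        have h3 : (s.card + 1) * (q - 1) = s.card * (q - 1) + (q - 1) := by ring
        omega
      have hih := ih (n - k) hcard
      have h4 : A ^ k * B ^ (n - k)
          ≤ A ^ k * ∑ i ∈ s, Ideal.span {x i ^ q} * B ^ (n - k - q) :=
        Ideal.mul_mono_right hih
      rw [Finset.mul_sum] at h4
      refine le_trans h4 ?_
      have h5 : ∀ i ∈ s, A ^ k * (Ideal.span {x i ^ q} * B ^ (n - k - q))
          ≤ ∑ i ∈ s, Ideal.span {x i ^ q} * (A + B) ^ (n - q) := by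
        intro i hi
        have h6 : A ^ k * (Ideal.span {x i ^ q} * B ^ (n - k - q))
            = Ideal.span {x i ^ q} * (A ^ k * B ^ (n - k - q)) := by ring
        rw [h6]
        have h7 : A ^ k * B ^ (n - k - q) ≤ (A + B) ^ (n - q) := by
          have hA2 : A ^ k ≤ (A + B) ^ k := SK.pow_mono_left le_sup_left _
          have hB2 : B ^ (n - k - q) ≤ (A + B) ^ (n - k - q) := SK.pow_mono_left le_sup_right _
          refine le_trans (Ideal.mul_mono hA2 hB2) ?_
          rw [← pow_add]
          refine Ideal.pow_le_pow_right ?_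
          omega
        refine le_trans (Ideal.mul_mono_right h7) ?_
        exact Finset.single_le_sum (f := fun i => Ideal.span {x i ^ q} * (A + B) ^ (n - q))
          (fun _ _ => bot_le) hi
      refine le_trans (SK.sum_le_ideal _ _ _ h5) ?_
      rw [Submodule.add_eq_sup]
      exact le_sup_right

/-- Key trick : if `t² = 0` and `z^p ≠ 0`, condition (*) forces `t ∈ (z)`. -/
lemma SK.key1 {p : ℕ} (hp : p.Prime) [CharP R p] [IsLocalRing R]
    (hstar : CondStar R p) {t z : R} (ht2 : t * t = 0) (hz : z ^ p ≠ 0) :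
    t ∈ Ideal.span {z} := by
  haveI : ExpChar R p := ExpChar.prime hp
  haveI := Fact.mk hp
  obtain ⟨p', hp'⟩ : ∃ p', p = p' + 2 := ⟨p - 2, by have := hp.two_le; omega⟩
  have htp : t ^ p = 0 := by
    rw [hp', pow_add, pow_two, ht2, mul_zero]
  have hzt : (z + t) ^ p = z ^ p := by
    rw [add_pow_char, htp, add_zero]
  set C : Ideal R := (Ideal.span {z}).colon (Ideal.span {t}) with hC
  have h1 : z ^ p ∈ bracketPow (Ideal.span {z + t}) (p ^ 1) ⊓
      bracketPow (Ideal.span {z}) (p ^ 1) := by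
    rw [pow_one, SK.bracketPow_span_singleton, SK.bracketPow_span_singleton, hzt]
    exact ⟨Ideal.mem_span_singleton_self _, Ideal.mem_span_singleton_self _⟩
  rw [← SK.bracketPow_inf hstar le_rfl] at h1
  rw [SK.span_add_inf_span z t] at h1
  rw [SK.bracketPow_mul hp, SK.bracketPow_span_singleton] at h1
  rw [pow_one, hzt] at h1
  obtain ⟨k, hkC, hk⟩ := Ideal.mem_mul_span_singleton.mp h1
  by_cases hCt : C = ⊤
  · have : (1 : R) ∈ C := hCt ▸ Submodule.mem_top
    have := Ideal.mem_colon_span_singleton.mp this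
    rwa [one_mul] at this
  · exfalso
    have hkM : k ∈ IsLocalRing.maximalIdeal R := by
      refine IsLocalRing.le_maximalIdeal hCt ?_
      exact SK.bracketPow_le_self C hp.one_lt.le hkC
    have hu : IsUnit (1 - k) :=
      IsLocalRing.isUnit_one_sub_self_of_mem_nonunits k
        ((IsLocalRing.mem_maximalIdeal k).mp hkM)
    have h0 : (1 - k) * z ^ p = 0 := by
      rw [sub_mul, one_mul, hk, sub_self]
    exact hz ((hu.mul_right_eq_zero).mp h0)

/-- Under (*), if some element of the maximal ideal is non-nilpotent then `R` is reduced. -/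
lemma SK.reduced {p : ℕ} (hp : p.Prime) [CharP R p] [IsLocalRing R] [IsNoetherianRing R]
    (hstar : CondStar R p)
    (hy : ∃ y ∈ IsLocalRing.maximalIdeal R, ¬IsNilpotent y) :
    ∀ t : R, t * t = 0 → t = 0 := by
  obtain ⟨y, hyM, hyn⟩ := hy
  intro t ht2
  by_contra ht0
  have hmem : ∀ k : ℕ, t ∈ (IsLocalRing.maximalIdeal R) ^ k := by
    intro k
    cases k with
    | zero => rw [pow_zero, Ideal.one_eq_top]; exact Submodule.mem_top
    | succ k' =>
      set k := k' + 1
      have hz : (y ^ k) ^ p ≠ 0 := by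
        intro h0
        exact hyn ⟨k * p, by rwa [pow_mul]⟩
      have := SK.key1 hp hstar ht2 hz
      have hsub : Ideal.span {y ^ k} ≤ (IsLocalRing.maximalIdeal R) ^ k := by
        rw [Ideal.span_le, Set.singleton_subset_iff]
        exact Ideal.pow_mem_pow hyM k
      exact hsub this
  have hfin : t ∈ ⨅ i : ℕ, (IsLocalRing.maximalIdeal R) ^ i :=
    (Submodule.mem_iInf _).mpr hmem
  rw [Ideal.iInf_pow_eq_bot_of_isLocalRing (IsLocalRing.maximalIdeal R)
    (Ideal.IsMaximal.ne_top (IsLocalRing.maximalIdeal.isMaximal R))] at hfin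
  exact ht0 hfin

lemma SK.reduced' {p : ℕ} (hp : p.Prime) [CharP R p] [IsLocalRing R] [IsNoetherianRing R]
    (hstar : CondStar R p)
    (hy : ∃ y ∈ IsLocalRing.maximalIdeal R, ¬IsNilpotent y) :
    ∀ t : R, IsNilpotent t → t = 0 := by
  have hred := SK.reduced hp hstar hy
  have key : ∀ n : ℕ, ∀ t : R, t ^ n = 0 → t = 0 := by
    intro n
    induction n using Nat.strong_induction_on with
    | _ n ih =>
      intro t hn
      rcases n with _ | _ | m
      · rw [pow_zero] at hn; exact absurd hn one_ne_zero
      · rwa [pow_one] at hn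
      · have h2 : t ^ (m + 1) * t ^ (m + 1) = 0 := by
          have he : t ^ (m + 1) * t ^ (m + 1) = t ^ (m + 2) * t ^ m := by ring
          rw [he, hn, zero_mul]
        exact ih (m + 1) (by omega) t (hred _ h2)
  rintro t ⟨n, hn⟩
  exact key n t hn

/-- Condition (*) together with regularity forces `R` to be a domain. -/
lemma SK.domain {p : ℕ} (hp : p.Prime) [CharP R p] [IsLocalRing R] [IsNoetherianRing R]
    (hstar : CondStar R p) (hreg : IsRegularStmt R) :
    ∀ u v : R, u * v = 0 → u = 0 ∨ v = 0 := by
  by_cases hy : ∃ y ∈ IsLocalRing.maximalIdeal R, ¬IsNilpotent y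
  case neg =>
    -- every element of the maximal ideal is nilpotent : dimension 0, so R is a field
    push_neg at hy
    have hall : ∀ P : PrimeSpectrum R, P.asIdeal = IsLocalRing.maximalIdeal R := by
      intro P
      refine le_antisymm (IsLocalRing.le_maximalIdeal P.isPrime.ne_top) ?_
      intro z hz
      obtain ⟨n, hn⟩ := hy z hz
      exact P.isPrime.mem_of_pow_mem n (hn ▸ Submodule.zero_mem _)
    haveI hsub : Subsingleton (PrimeSpectrum R) :=
      ⟨fun P Q => PrimeSpectrum.ext ((hall P).trans (hall Q).symm)⟩
    have hdim : ringKrullDim R = 0 :=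
      le_antisymm Order.krullDim_nonpos_of_subsingleton (ringKrullDim_nonneg_of_nontrivial (R := R))
    obtain ⟨s, hsM, hsc⟩ := hreg
    rw [hdim] at hsc
    have hc0 : s.card = 0 := by
      exact_mod_cast (show ((s.card : ℕ∞) : WithBot ℕ∞) = ((0 : ℕ∞) : WithBot ℕ∞) from hsc)
    rw [Finset.card_eq_zero.mp hc0] at hsM
    have hM : IsLocalRing.maximalIdeal R = ⊥ := by
      rw [hsM, Finset.coe_empty, Ideal.span_empty]
    intro u v huv
    by_cases hu : u = 0
    · exact Or.inl hu
    · right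
      have hU : IsUnit u := by
        by_contra hU
        have : u ∈ IsLocalRing.maximalIdeal R := (IsLocalRing.mem_maximalIdeal u).mpr hU
        rw [hM] at this
        exact hu this
      exact (hU.mul_right_eq_zero).mp huv
  case pos =>
    have hred := SK.reduced' hp hstar hy
    intro u v huv
    by_cases hu : u = 0
    · exact Or.inl hu
    by_cases hv : v = 0
    · exact Or.inr hv
    exfalso
    have hUu : ¬IsUnit u := fun hU => hv ((hU.mul_right_eq_zero).mp huv)
    have hUv : ¬IsUnit v := fun hU => hu ((hU.mul_left_eq_zero).mp huv)
    have huM : u ∈ IsLocalRing.maximalIdeal R := (IsLocalRing.mem_maximalIdeal u).mpr hUu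
    set C : Ideal R := (Ideal.span {u}).colon (Ideal.span {v}) with hCdef
    by_cases hC : C = ⊤
    · -- then v ∈ (u), hence v² = 0
      have h1 : (1 : R) ∈ C := hC ▸ Submodule.mem_top
      have h2 : v ∈ Ideal.span {u} := by
        have := Ideal.mem_colon_span_singleton.mp h1
        rwa [one_mul] at this
      obtain ⟨s', hs'⟩ := Ideal.mem_span_singleton'.mp h2
      have h3 : v * v = 0 := by
        calc v * v = s' * (u * v) := by rw [← hs']; ring
          _ = 0 := by rw [huv, mul_zero]
      exact hv (hred v ⟨2, by rw [pow_two]; exact h3⟩)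
    have hCM : C ≤ IsLocalRing.maximalIdeal R := IsLocalRing.le_maximalIdeal hC
    have key : ∀ e : ℕ, 1 ≤ e → u * u ∈ (IsLocalRing.maximalIdeal R) ^ (p ^ e) := by
      intro e he
      have hq0 : 0 < p ^ e := pow_pos hp.pos e
      obtain ⟨q', hq'⟩ : ∃ q', p ^ e = q' + 1 := ⟨p ^ e - 1, by omega⟩
      set q := p ^ e with hqdef
      have hbin : (u + v) ^ q = u ^ q + v ^ q :=
        SK.add_pow_of_mul_eq_zero huv q (by omega)
      have hv0 : u * v ^ q = 0 := by
        have h0 : u * v ^ (q' + 1) = v ^ q' * (u * v) := by ring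
        rw [hq', h0, huv, mul_zero]
      have huq : u * (u + v) ^ q = u ^ (q + 1) := by
        rw [hbin, mul_add, hv0, add_zero, ← pow_succ']
      have h1 : u ^ (q + 1) ∈ bracketPow (Ideal.span {u + v}) (p ^ e) ⊓
          bracketPow (Ideal.span {u}) (p ^ e) := by
        rw [SK.bracketPow_span_singleton, SK.bracketPow_span_singleton]
        exact ⟨Ideal.mem_span_singleton'.mpr ⟨u, huq⟩,
          Ideal.mem_span_singleton'.mpr ⟨u, (pow_succ' u q).symm⟩⟩
      rw [← SK.bracketPow_inf hstar he, SK.span_add_inf_span u v,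
        SK.bracketPow_mul hp, SK.bracketPow_span_singleton] at h1
      obtain ⟨c, hcK, hc⟩ := Ideal.mem_mul_span_singleton.mp h1
      rw [hbin] at hc
      -- hc : c * (u^q + v^q) = u^(q+1)
      have h2 : c * v ^ (2 * q) = 0 := by
        have hmul := congrArg (fun w => w * v ^ q) hc
        have hl : c * (u ^ q + v ^ q) * v ^ q
            = c * v ^ (2 * q) + (u * v) * (c * u ^ q' * v ^ q') := by
          rw [hq']; ring
        have hr : u ^ (q + 1) * v ^ q = (u * v) * (u ^ q * v ^ q') := by
          rw [hq']; ring
        rw [hl, hr, huv, zero_mul, zero_mul, add_zero] at hmul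
        exact hmul
      have h3 : c * v = 0 := by
        refine hred _ ⟨2 * q, ?_⟩
        have hcv : (c * v) ^ (2 * q) = c ^ (2 * q' + 1) * (c * v ^ (2 * q)) := by
          rw [hq']; ring
        rw [hcv, h2, mul_zero]
      have h4 : u ^ q * (u - c) = 0 := by
        have hcvq : c * v ^ q = 0 := by
          have h0 : c * v ^ (q' + 1) = (c * v) * v ^ q' := by ring
          rw [hq', h0, h3, zero_mul]
        have h5 : c * u ^ q = u ^ (q + 1) := by
          rw [mul_add, hcvq, add_zero] at hc; exact hc
        calc u ^ q * (u - c) = u * u ^ q - c * u ^ q := by ring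
          _ = u ^ (q + 1) - u ^ (q + 1) := by rw [h5, ← pow_succ']
          _ = 0 := sub_self _
      have h6 : u * (u - c) = 0 := by
        refine hred _ ⟨q, ?_⟩
        have h0 : (u * (u - c)) ^ q = (u ^ q * (u - c)) * (u - c) ^ q' := by
          rw [hq', mul_pow, pow_succ]
          ring
        rw [h0, h4, zero_mul]
      have h7 : u * u = c * u := by
        have h0 : u * u - c * u = 0 := by rw [← h6]; ring
        have := sub_eq_zero.mp h0
        exact this
      have hcM : c ∈ (IsLocalRing.maximalIdeal R) ^ q :=
        ((SK.bracketPow_le_pow C q).trans (SK.pow_mono_left hCM q)) hcK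
      rw [h7]
      exact Ideal.mul_mem_right u _ hcM
    have hfin : u * u ∈ ⨅ n : ℕ, (IsLocalRing.maximalIdeal R) ^ n := by
      refine (Submodule.mem_iInf _).mpr ?_
      intro n
      have hle : n ≤ p ^ (n + 1) := by
        have h1 : n < 2 ^ n := Nat.lt_two_pow_self
        have h2 : 2 ^ n ≤ p ^ n := Nat.pow_le_pow_left hp.two_le n
        have h3 : p ^ n ≤ p ^ (n + 1) := Nat.pow_le_pow_right hp.pos (by omega)
        omega
      exact Ideal.pow_le_pow_right hle (key (n + 1) (by omega))
    rw [Ideal.iInf_pow_eq_bot_of_isLocalRing (IsLocalRing.maximalIdeal R)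
      (Ideal.IsMaximal.ne_top (IsLocalRing.maximalIdeal.isMaximal R))] at hfin
    exact hu (hred u ⟨2, by rw [pow_two]; exact hfin⟩)

/-- Flatness-type colon trick, valid in domains satisfying (*). -/
lemma SK.crux {p : ℕ} (hp : p.Prime) [CharP R p]
    (hstar : CondStar R p) (hdom : ∀ u v : R, u * v = 0 → u = 0 ∨ v = 0)
    {e : ℕ} (he : 1 ≤ e) (I : Ideal R) {g : R} (hg : g ≠ 0) {r : R}
    (hr : r * g ^ (p ^ e) ∈ bracketPow I (p ^ e)) :
    r ∈ bracketPow (I.colon (Ideal.span {g})) (p ^ e) := by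
  have hgq : g ^ (p ^ e) ≠ 0 := by
    intro h0
    have key : ∀ n : ℕ, g ^ n = 0 → g = 0 := by
      intro n
      induction n with
      | zero =>
        intro h
        rw [pow_zero] at h
        rw [← mul_one g, h, mul_zero]
      | succ k ih =>
        intro h
        rw [pow_succ] at h
        rcases hdom _ _ h with h1 | h1
        · exact ih h1
        · exact h1
    exact hg (key _ h0)
  have h1 : r * g ^ (p ^ e) ∈ bracketPow I (p ^ e) ⊓
      bracketPow (Ideal.span {g}) (p ^ e) := by
    refine ⟨hr, ?_⟩
    rw [SK.bracketPow_span_singleton]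
    exact Ideal.mem_span_singleton'.mpr ⟨r, rfl⟩
  rw [← SK.bracketPow_inf hstar he, SK.inf_span_singleton I g,
    SK.bracketPow_mul hp, SK.bracketPow_span_singleton] at h1
  obtain ⟨k, hkK, hk⟩ := Ideal.mem_mul_span_singleton.mp h1
  have h2 : (k - r) * g ^ (p ^ e) = 0 := by
    rw [sub_mul, hk, sub_self]
  rcases hdom _ _ h2 with h3 | h3
  · have : k = r := by
      have := sub_eq_zero.mp h3; exact this
    rwa [← this]
  · exact absurd h3 hgq

lemma SK.span_range_eq_sum {m : ℕ} (x : Fin m → R) :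
    Ideal.span (Set.range x) = ∑ i : Fin m, Ideal.span {x i} := by
  apply le_antisymm
  · rw [Ideal.span_le]
    rintro _ ⟨i, rfl⟩
    have h1 : Ideal.span {x i} ≤ ∑ i : Fin m, Ideal.span {x i} :=
      Finset.single_le_sum (f := fun i => Ideal.span {x i})
        (fun _ _ => bot_le) (Finset.mem_univ i)
    exact h1 (Ideal.mem_span_singleton_self _)
  · apply SK.sum_le_ideal
    intro i _
    rw [Ideal.span_le, Set.singleton_subset_iff]
    exact Ideal.subset_span ⟨i, rfl⟩

/-- Pigeonhole consequence : `a^n ⊆ a^{[q]}·a^{n-q}` when `n > m(q-1)`. -/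
lemma SK.pow_le_bracket_mul {m : ℕ} (x : Fin m → R) {a : Ideal R}
    (hgen : a = Ideal.span (Set.range x)) {q n : ℕ} (hq : 1 ≤ q)
    (hn : m * q + 1 ≤ n) :
    a ^ n ≤ bracketPow a q * a ^ (n - q) := by
  have hmn : m * (q - 1) < n := by
    have : m * (q - 1) ≤ m * q := Nat.mul_le_mul_left m (by omega)
    omega
  have ha : a = ∑ i : Fin m, Ideal.span {x i} := hgen.trans (SK.span_range_eq_sum x)
  have hp1 := SK.pigeon x q hq Finset.univ n (by rwa [Finset.card_univ, Fintype.card_fin])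
  rw [← ha] at hp1
  refine le_trans hp1 ?_
  apply SK.sum_le_ideal
  intro i _
  refine Ideal.mul_mono ?_ le_rfl
  rw [Ideal.span_le, Set.singleton_subset_iff]
  refine SK.pow_mem_bracketPow ?_ q
  rw [hgen]
  exact Ideal.subset_span ⟨i, rfl⟩

lemma SK.bracket_mul_le_pow {a : Ideal R} {q n : ℕ} (hqn : q ≤ n) :
    bracketPow a q * a ^ (n - q) ≤ a ^ n := by
  refine le_trans (Ideal.mul_mono (SK.bracketPow_le_pow a q) le_rfl) ?_
  rw [← pow_add, show q + (n - q) = n from by omega]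

/-- Per-`e` Skoda, easy direction : `I_e(a^n) ⊆ a·I_e(a^{n-q})`. -/
lemma SK.IeA {p : ℕ} (hp : p.Prime) [CharP R p] (hstar : CondStar R p)
    {m : ℕ} (x : Fin m → R) {a : Ideal R} (hgen : a = Ideal.span (Set.range x))
    {e : ℕ} (he : 1 ≤ e) {n : ℕ} (hn : m * p ^ e + 1 ≤ n) :
    Ie p (a ^ n) e ≤ a * Ie p (a ^ (n - p ^ e)) e := by
  have hq : 1 ≤ p ^ e := Nat.one_le_pow e p hp.pos
  apply SK.Ie_le
  calc a ^ n ≤ bracketPow a (p ^ e) * a ^ (n - p ^ e) :=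
        SK.pow_le_bracket_mul x hgen hq hn
    _ ≤ bracketPow a (p ^ e) * bracketPow (Ie p (a ^ (n - p ^ e)) e) (p ^ e) :=
        Ideal.mul_mono_right (hstar _ e he)
    _ = bracketPow (a * Ie p (a ^ (n - p ^ e)) e) (p ^ e) :=
        (SK.bracketPow_mul hp _ _ e).symm

/-- Per-`e` Skoda, hard direction : `a·I_e(a^{n-q}) ⊆ I_e(a^n)` (uses the domain property). -/
lemma SK.IeB {p : ℕ} (hp : p.Prime) [CharP R p] (hstar : CondStar R p)
    (hdom : ∀ u v : R, u * v = 0 → u = 0 ∨ v = 0)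
    {m : ℕ} (x : Fin m → R) {a : Ideal R} (hgen : a = Ideal.span (Set.range x))
    {e : ℕ} (he : 1 ≤ e) {n : ℕ} (hqn : p ^ e ≤ n) :
    a * Ie p (a ^ (n - p ^ e)) e ≤ Ie p (a ^ n) e := by
  set q := p ^ e with hqdef
  set I := Ie p (a ^ n) e with hIdef
  set J := Ie p (a ^ (n - q)) e with hJdef
  have hI : a ^ n ≤ bracketPow I q := hstar _ e he
  have ha : a = ∑ i : Fin m, Ideal.span {x i} := hgen.trans (SK.span_range_eq_sum x)
  rw [ha, Finset.sum_mul]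
  apply SK.sum_le_ideal
  intro i _
  by_cases hxi : x i = 0
  · rw [hxi, Ideal.span_singleton_eq_bot.mpr rfl, bot_mul]
    exact bot_le
  · have hJC : J ≤ I.colon (Ideal.span {x i}) := by
      apply SK.Ie_le
      intro w hw
      have hwmem : w * (x i) ^ q ∈ bracketPow I q := by
        have h1 : (x i) ^ q ∈ bracketPow a q := by
          refine SK.pow_mem_bracketPow ?_ q
          rw [hgen]; exact Ideal.subset_span ⟨i, rfl⟩
        have h2 : (x i) ^ q * w ∈ bracketPow a q * a ^ (n - q) :=
          Ideal.mul_mem_mul h1 hw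
        have h3 : (x i) ^ q * w ∈ a ^ n := SK.bracket_mul_le_pow hqn h2
        have h4 : w * (x i) ^ q = (x i) ^ q * w := mul_comm _ _
        rw [h4]
        exact hI h3
      exact SK.crux hp hstar hdom he I hxi hwmem
    rw [Ideal.mul_le]
    intro r hr s hs
    obtain ⟨cr, rfl⟩ := Ideal.mem_span_singleton'.mp hr
    have h5 : s * x i ∈ I := Ideal.mem_colon_span_singleton.mp (hJC hs)
    have h6 : cr * x i * s = cr * (s * x i) := by ring
    rw [h6]
    exact Ideal.mul_mem_left _ _ h5

lemma SK.ceil_sub {p : ℕ} (hp : p.Prime) {c : ℝ} (hc : 1 ≤ c) (e : ℕ) :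
    ⌈c * (p : ℝ) ^ e⌉₊ - p ^ e = ⌈(c - 1) * (p : ℝ) ^ e⌉₊ := by
  have hcast : (p : ℝ) ^ e = ((p ^ e : ℕ) : ℝ) := by push_cast; ring
  have h0 : (0 : ℝ) ≤ (c - 1) * (p : ℝ) ^ e := by
    apply mul_nonneg (by linarith)
    positivity
  have h1 : ⌈(c - 1) * (p : ℝ) ^ e + ((p ^ e : ℕ) : ℝ)⌉₊ = ⌈(c - 1) * (p : ℝ) ^ e⌉₊ + p ^ e :=
    Nat.ceil_add_natCast h0 (p ^ e)
  have h2 : (c - 1) * (p : ℝ) ^ e + ((p ^ e : ℕ) : ℝ) = c * (p : ℝ) ^ e := by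
    rw [← hcast]; ring
  rw [h2] at h1
  omega

lemma SK.tau_mono (p : ℕ) (a : Ideal R) {c c' : ℝ} (h : c' ≤ c) :
    tau p a c ≤ tau p a c' := by
  refine iSup_le fun e => ?_
  refine le_trans ?_ (le_iSup
    (fun e' : {e : ℕ // 1 ≤ e} => Ie p (a ^ ⌈c' * (p : ℝ) ^ (e' : ℕ)⌉₊) (e' : ℕ)) e)
  apply SK.Ie_mono
  apply Ideal.pow_le_pow_right
  exact Nat.ceil_mono (mul_le_mul_of_nonneg_right h (by positivity))

lemma SK.tau_bot (p : ℕ) (hp : p.Prime) {c : ℝ} (hc : 0 < c) :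
    tau p (⊥ : Ideal R) c = ⊥ := by
  refine le_antisymm ?_ bot_le
  refine iSup_le ?_
  rintro ⟨e, he⟩
  have hp0 : (0 : ℝ) < (p : ℝ) ^ (e : ℕ) := by
    have : (0 : ℝ) < (p : ℝ) := by exact_mod_cast hp.pos
    positivity
  have hn : 1 ≤ ⌈c * (p : ℝ) ^ (e : ℕ)⌉₊ := Nat.ceil_pos.mpr (mul_pos hc hp0)
  have hbot : (⊥ : Ideal R) ^ ⌈c * (p : ℝ) ^ (e : ℕ)⌉₊ = ⊥ := by
    rw [← Ideal.zero_eq_bot, zero_pow (by omega : ⌈c * (p : ℝ) ^ (e : ℕ)⌉₊ ≠ 0)]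
  rw [hbot]
  exact SK.Ie_le bot_le

lemma SK.tauA {p : ℕ} (hp : p.Prime) [CharP R p] (hstar : CondStar R p)
    {m : ℕ} (hm : 1 ≤ m) (x : Fin m → R) {a : Ideal R}
    (hgen : a = Ideal.span (Set.range x)) {c : ℝ} (hc : (m : ℝ) < c) :
    tau p a c ≤ a * tau p a (c - 1) := by
  have hc1 : (1 : ℝ) ≤ c := le_trans (by exact_mod_cast hm) hc.le
  refine iSup_le ?_
  rintro ⟨e, he⟩
  have hq0 : 0 < p ^ e := pow_pos hp.pos e
  have hppos : (0 : ℝ) < (p : ℝ) ^ e := by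
    have : (0 : ℝ) < (p : ℝ) := by exact_mod_cast hp.pos
    positivity
  have hcast : (p : ℝ) ^ e = ((p ^ e : ℕ) : ℝ) := by push_cast; ring
  have hn : m * p ^ e + 1 ≤ ⌈c * (p : ℝ) ^ e⌉₊ := by
    have h1 : (↑(m * p ^ e) : ℝ) < c * (p : ℝ) ^ e := by
      push_cast
      exact mul_lt_mul_of_pos_right hc hppos
    have h2 := Nat.lt_ceil.mpr h1
    omega
  have hsub := SK.ceil_sub hp hc1 e
  calc Ie p (a ^ ⌈c * (p : ℝ) ^ e⌉₊) e
      ≤ a * Ie p (a ^ (⌈c * (p : ℝ) ^ e⌉₊ - p ^ e)) e := SK.IeA hp hstar x hgen he hn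
    _ ≤ a * tau p a (c - 1) := by
        apply Ideal.mul_mono_right
        rw [hsub]
        exact le_iSup
          (fun e' : {e : ℕ // 1 ≤ e} => Ie p (a ^ ⌈(c - 1) * (p : ℝ) ^ (e' : ℕ)⌉₊) (e' : ℕ))
          ⟨e, he⟩

lemma SK.tauB {p : ℕ} (hp : p.Prime) [CharP R p] (hstar : CondStar R p)
    (hdom : ∀ u v : R, u * v = 0 → u = 0 ∨ v = 0)
    {m : ℕ} (x : Fin m → R) {a : Ideal R}
    (hgen : a = Ideal.span (Set.range x)) {c : ℝ} (hc : (1 : ℝ) < c) :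
    a * tau p a (c - 1) ≤ tau p a c := by
  have htau : tau p a (c - 1)
      = ⨆ e' : {e : ℕ // 1 ≤ e}, Ie p (a ^ ⌈(c - 1) * (p : ℝ) ^ (e' : ℕ)⌉₊) (e' : ℕ) := rfl
  rw [htau, ← Ideal.smul_eq_mul, Submodule.smul_iSup]
  refine iSup_le ?_
  rintro ⟨e, he⟩
  rw [Ideal.smul_eq_mul]
  have hq0 : 0 < p ^ e := pow_pos hp.pos e
  have hppos : (0 : ℝ) < (p : ℝ) ^ e := by
    have : (0 : ℝ) < (p : ℝ) := by exact_mod_cast hp.pos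
    positivity
  have hcast : (p : ℝ) ^ e = ((p ^ e : ℕ) : ℝ) := by push_cast; ring
  have hqn : p ^ e ≤ ⌈c * (p : ℝ) ^ e⌉₊ := by
    have h1 : ((p ^ e : ℕ) : ℝ) < c * (p : ℝ) ^ e := by
      rw [← hcast]
      nlinarith
    have h2 := Nat.lt_ceil.mpr h1
    omega
  have hsub := SK.ceil_sub hp hc.le e
  rw [← hsub]
  refine le_trans (SK.IeB hp hstar hdom x hgen he hqn) ?_
  exact le_iSup
    (fun e' : {e : ℕ // 1 ≤ e} => Ie p (a ^ ⌈c * (p : ℝ) ^ (e' : ℕ)⌉₊) (e' : ℕ)) ⟨e, he⟩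

end SK

/-- If `a` is generated by `m` elements and `α > m` is an F-jumping coefficient of `a`,
then `α - 1` is also an F-jumping coefficient of `a`. -/
theorem stmt6 {R : Type*} [CommRing R] [IsNoetherianRing R] [IsLocalRing R]
    (p : ℕ) (hp : p.Prime) [CharP R p]
    (hreg : IsRegularStmt R) (hstar : CondStar R p) (a : Ideal R)
    (m : ℕ) (x : Fin m → R) (hgen : a = Ideal.span (Set.range x))
    (α : ℝ) (hα : (m : ℝ) < α) (h : IsFJumpingCoeff p a α) :
    IsFJumpingCoeff p a (α - 1) := by
  obtain ⟨hα0, hjump⟩ := h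
  rcases Nat.eq_zero_or_pos m with hm0 | hm1
  · exfalso
    subst hm0
    have hbot : a = ⊥ := by
      rw [hgen]
      rw [Set.range_eq_empty x, Ideal.span_empty]
    refine hjump (α / 2) (by linarith) (by linarith) ?_
    rw [hbot, SK.tau_bot p hp hα0, SK.tau_bot p hp (show (0:ℝ) < α - α / 2 by linarith)]
  · have hm1' : (1 : ℝ) ≤ (m : ℝ) := by exact_mod_cast hm1
    have hα1 : (1 : ℝ) < α := lt_of_le_of_lt hm1' hα
    have hdom := SK.domain hp hstar hreg
    refine ⟨by linarith, ?_⟩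
    intro ε hε hεα1 hEq
    set ε' := min ε ((α - m) / 2) with hε'def
    have hαm : (0 : ℝ) < α - m := by linarith
    have hε'0 : 0 < ε' := lt_min hε (by linarith)
    have hε'ε : ε' ≤ ε := min_le_left _ _
    have hε'αm : ε' < α - m := lt_of_le_of_lt (min_le_right _ _) (by linarith)
    have hEq' : tau p a (α - 1) = tau p a (α - 1 - ε') := by
      refine le_antisymm (SK.tau_mono p a (by linarith)) ?_
      rw [hEq]
      exact SK.tau_mono p a (by linarith)
    have k1 : tau p a (α - ε') ≤ a * tau p a (α - ε' - 1) :=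
      SK.tauA hp hstar hm1 x hgen (show (m : ℝ) < α - ε' by linarith)
    have harg : α - ε' - 1 = α - 1 - ε' := by ring
    rw [harg] at k1
    have k3 : a * tau p a (α - 1) ≤ tau p a α :=
      SK.tauB hp hstar hdom x hgen hα1
    have k4 : tau p a α ≤ tau p a (α - ε') := SK.tau_mono p a (by linarith)
    have hfinal : tau p a α = tau p a (α - ε') := by
      refine le_antisymm k4 ?_
      calc tau p a (α - ε') ≤ a * tau p a (α - 1 - ε') := k1
        _ = a * tau p a (α - 1) := by rw [hEq']
        _ ≤ tau p a α := k3
    exact hjump ε' hε'0 (by linarith) hfinal
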